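/- Exact solution (3-9) of the reduced ODE system (3-4): let d1, d2, d3 be real constants with d1 ≠ d3, let α0, β, C be real constants with β ≠ 0, and suppose 1 + β·C·(e^t − 1) ≠ 0 for all t in an open interval I. Then the functions φ1(t) = C·e^t/(1 + β·C·(e^t − 1)), φ2(t) = β·C·e^t/(1 + β·C·(e^t − 1)), φ3(t) = (d1 − d2)·(β − α0 + β·C·(α0 − β − α0·e^t))/(β·(d1 − d3)·(1 + β·C·(e^t − 1))) satisfy, for all t ∈ I, the ODE system φ1' + φ1(φ2 − 1) = 0, φ2' − φ2φ3 + ((d2 − d3)/(d1 − d3))·φ2(φ2 − 1) − (α0(d1 − d2)/(d1 − d3))·φ1 = 0, φ3' + φ2φ3 + (α0(d1 − d2)/(d1 − d3))·φ1 = 0. -/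

import Mathlib

/-- Exact solution (3-9) of the reduced ODE system (3-4). -/
theorem hgf_reduced_ode_exact_solution_3_9
    (d1 d2 d3 : ℝ) (hd13 : d1 ≠ d3)
    (α0 β C : ℝ) (hβ : β ≠ 0)
    (a b : ℝ) (I : Set ℝ) (hI : I = Set.Ioo a b)
    (hden : ∀ t ∈ I, 1 + β * C * (Real.exp t - 1) ≠ 0)
    (φ1 φ2 φ3 : ℝ → ℝ)
    (hφ1 : ∀ t : ℝ, φ1 t = C * Real.exp t / (1 + β * C * (Real.exp t - 1)))
    (hφ2 : ∀ t : ℝ, φ2 t = β * C * Real.exp t / (1 + β * C * (Real.exp t - 1)))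
    (hφ3 : ∀ t : ℝ, φ3 t = (d1 - d2) * (β - α0 + β * C * (α0 - β - α0 * Real.exp t))
        / (β * (d1 - d3) * (1 + β * C * (Real.exp t - 1)))) :
    ∀ t ∈ I,
      deriv φ1 t + φ1 t * (φ2 t - 1) = 0 ∧
      deriv φ2 t - φ2 t * φ3 t
        + ((d2 - d3) / (d1 - d3)) * (φ2 t * (φ2 t - 1))
        - (α0 * (d1 - d2) / (d1 - d3)) * φ1 t = 0 ∧
      deriv φ3 t + φ2 t * φ3 t + (α0 * (d1 - d2) / (d1 - d3)) * φ1 t = 0 := by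
  intro t ht
  have hd13' : d1 - d3 ≠ 0 := sub_ne_zero.mpr hd13
  have hDt : 1 + β * C * (Real.exp t - 1) ≠ 0 := hden t ht
  have hφ1' : φ1 = fun t => C * Real.exp t / (1 + β * C * (Real.exp t - 1)) :=
    funext hφ1
  have hφ2' : φ2 = fun t => β * C * Real.exp t / (1 + β * C * (Real.exp t - 1)) :=
    funext hφ2
  have hφ3' : φ3 = fun t => (d1 - d2) * (β - α0 + β * C * (α0 - β - α0 * Real.exp t))
      / (β * (d1 - d3) * (1 + β * C * (Real.exp t - 1))) := funext hφ3
  have hD : HasDerivAt (fun t => 1 + β * C * (Real.exp t - 1)) (β * C * Real.exp t) t := by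
    simpa using (((Real.hasDerivAt_exp t).sub_const 1).const_mul (β * C)).const_add 1
  have hN1 : HasDerivAt (fun t => C * Real.exp t) (C * Real.exp t) t :=
    (Real.hasDerivAt_exp t).const_mul C
  have hN2 : HasDerivAt (fun t => β * C * Real.exp t) (β * C * Real.exp t) t :=
    (Real.hasDerivAt_exp t).const_mul (β * C)
  have hN3 : HasDerivAt (fun t => (d1 - d2) * (β - α0 + β * C * (α0 - β - α0 * Real.exp t)))
      ((d1 - d2) * (β * C * (0 - α0 * Real.exp t))) t := by
    exact ((((hasDerivAt_const t (α0 - β)).sub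
      ((Real.hasDerivAt_exp t).const_mul α0)).const_mul (β * C)).const_add
      (β - α0)).const_mul (d1 - d2)
  have hD3 : HasDerivAt (fun t => β * (d1 - d3) * (1 + β * C * (Real.exp t - 1)))
      (β * (d1 - d3) * (β * C * Real.exp t)) t := hD.const_mul (β * (d1 - d3))
  have hD3t : β * (d1 - d3) * (1 + β * C * (Real.exp t - 1)) ≠ 0 :=
    mul_ne_zero (mul_ne_zero hβ hd13') hDt
  have h1 : deriv (fun t => C * Real.exp t / (1 + β * C * (Real.exp t - 1))) t = _ :=
    (hN1.div hD hDt).deriv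
  have h2 : deriv (fun t => β * C * Real.exp t / (1 + β * C * (Real.exp t - 1))) t = _ :=
    (hN2.div hD hDt).deriv
  have h3 : deriv (fun t => (d1 - d2) * (β - α0 + β * C * (α0 - β - α0 * Real.exp t))
      / (β * (d1 - d3) * (1 + β * C * (Real.exp t - 1)))) t = _ :=
    (hN3.div hD3 hD3t).deriv
  rw [hφ1', hφ2', hφ3']
  refine ⟨?_, ?_, ?_⟩ <;> simp only [h1, h2, h3] <;>
    generalize hDd : 1 + β * C * (Real.exp t - 1) = D at * <;> field_simp <;> subst hDd <;> ring
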